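/- Let K be the simplest cubic field with a ≥ 0 and O_K = Z[ρ]. Each element α = -v - wρ + (v+1)ρ^2 with 0 ≤ v ≤ a and v(a+2)+1 ≤ w ≤ (v+1)(a+1) is totally positive and indecomposable in O_K. -/

import Mathlib

set_option maxHeartbeats 4000000

private lemma noratroot (a m n : ℤ) (h : m^3 - a*m^2*n - (a+3)*m*n^2 - n^3 = 0) (hn : n ≠ 0) :
    m = n ∨ m = -n := by
  have hgN : 0 < Int.gcd m n := Int.gcd_pos_of_ne_zero_right m hn
  have hg : 0 < (Int.gcd m n : ℤ) := by exact_mod_cast hgN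
  set g : ℤ := (Int.gcd m n : ℤ) with hgdef
  obtain ⟨m', hm⟩ : g ∣ m := Int.gcd_dvd_left m n
  obtain ⟨n', hn'⟩ : g ∣ n := Int.gcd_dvd_right m n
  have hcop : IsCoprime m' n' := by
    rw [Int.isCoprime_iff_gcd_eq_one]
    have h2 := Int.gcd_div_gcd_div_gcd (i := m) (j := n) hgN
    have hm' : m / g = m' := by rw [hm]; exact Int.mul_ediv_cancel_left _ (ne_of_gt hg)
    have hn'' : n / g = n' := by rw [hn']; exact Int.mul_ediv_cancel_left _ (ne_of_gt hg)
    rwa [hm', hn''] at h2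
  have heq : m'^3 - a*m'^2*n' - (a+3)*m'*n'^2 - n'^3 = 0 := by
    have h3 : g^3 * (m'^3 - a*m'^2*n' - (a+3)*m'*n'^2 - n'^3) = 0 := by
      rw [hm, hn'] at h; linear_combination h
    rcases mul_eq_zero.1 h3 with h' | h'
    · exact absurd (pow_eq_zero_iff (by norm_num) |>.1 h') (ne_of_gt hg)
    · exact h'
  have hnu : IsUnit n' := by
    have hdvd : n' ∣ m'^3 := ⟨a*m'^2 + (a+3)*m'*n' + n'^2, by linear_combination heq⟩
    exact (hcop.symm.pow_right).isUnit_of_dvd hdvd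
  have hmu : IsUnit m' := by
    have hdvd : m' ∣ n'^3 := ⟨m'^2 - a*m'*n' - (a+3)*n'^2, by linear_combination -heq⟩
    exact (hcop.pow_right).isUnit_of_dvd hdvd
  rcases Int.isUnit_iff.1 hnu with h1 | h1 <;> rcases Int.isUnit_iff.1 hmu with h2 | h2 <;>
    rw [hm, hn', h1, h2] <;> omega

private lemma ratroot_false (a : ℤ) (ha : 0 ≤ a) (ρ : ℝ)
    (hρ : ρ^3 - a*ρ^2 - (a+3)*ρ - 1 = 0) (hb1 : (a:ℝ) + 1 < ρ)
    (m n : ℤ) (hn : n ≠ 0) (hreal : (n:ℝ)*ρ = m) : False := by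
  have ha' : (0:ℝ) ≤ a := by exact_mod_cast ha
  have hn' : (n:ℝ) ≠ 0 := Int.cast_ne_zero.2 hn
  have hint : ((m^3 - a*m^2*n - (a+3)*m*n^2 - n^3 : ℤ) : ℝ) = 0 := by
    push_cast
    linear_combination ((m:ℝ)^2 + m*n*ρ + n^2*ρ^2 - a*n*m - a*n^2*ρ - (a+3)*n^2) * hreal.symm
      + (n:ℝ)^3*hρ
  have hint' : m^3 - a*m^2*n - (a+3)*m*n^2 - n^3 = 0 := by exact_mod_cast hint
  rcases noratroot a m n hint' hn with h1 | h1
  · have h2 : (n:ℝ)*ρ = (n:ℝ)*1 := by rw [hreal, h1]; push_cast; ring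
    have := mul_left_cancel₀ hn' h2
    linarith
  · have h2 : (n:ℝ)*ρ = (n:ℝ)*(-1) := by rw [hreal, h1]; push_cast; ring
    have := mul_left_cancel₀ hn' h2
    linarith

private lemma indep (a : ℤ) (ha : 0 ≤ a) (ρ : ℝ)
    (hρ : ρ^3 - a*ρ^2 - (a+3)*ρ - 1 = 0) (hb1 : (a:ℝ) + 1 < ρ)
    (p q r : ℤ) (h : (p:ℝ) + q*ρ + r*ρ^2 = 0) : p = 0 ∧ q = 0 ∧ r = 0 := by
  by_cases hr : r = 0
  · subst hr
    by_cases hq : q = 0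
    · subst hq
      have hp : (p:ℝ) = 0 := by push_cast at h; linarith
      exact ⟨by exact_mod_cast hp, rfl, rfl⟩
    · exfalso
      refine ratroot_false a ha ρ hρ hb1 (-p) q hq ?_
      push_cast at h ⊢; linarith
  · exfalso
    set A : ℤ := q^2 - p*r + a*q*r - (a+3)*r^2 with hAdef
    set B : ℤ := r^2 - a*p*r - p*q with hBdef
    have hAB : (A:ℝ)*ρ = B := by
      push_cast [hAdef, hBdef]
      linear_combination (-((r:ℝ)*ρ - a*r - q))*h + (r:ℝ)^2*hρ
    by_cases hA : A = 0
    · have hB : B = 0 := by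
        have : (B:ℝ) = 0 := by rw [← hAB, hA]; push_cast; ring
        exact_mod_cast this
      have hC : (a*r+q)^3 - a*(a*r+q)^2*r - (a+3)*(a*r+q)*r^2 - r^3 = 0 := by
        rw [hAdef] at hA; rw [hBdef] at hB
        linear_combination (a*r+q)*hA - r*hB
      have hr3 : r^3 ≠ 0 := pow_ne_zero _ hr
      rcases noratroot a _ _ hC hr with h1 | h1
      · have h2 : (-(2*a+3))*r^3 = 0 := by
          linear_combination hC - ((a*r+q)^2 + (a*r+q)*r + r^2 - a*r*((a*r+q)+r) - (a+3)*r^2)*h1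
        rcases mul_eq_zero.1 h2 with h3 | h3
        · omega
        · exact hr3 h3
      · have h2 : r^3 = 0 := by
          linear_combination hC - ((a*r+q)^2 - (a*r+q)*r + r^2 - a*r*((a*r+q) - r) - (a+3)*r^2)*h1
        exact hr3 h2
    · exact ratroot_false a ha ρ hρ hb1 B A hA hAB

theorem simplest_cubic_triangle_indecomposable (a : ℤ) (ha : 0 ≤ a) (ρ ρ' ρ'' : ℝ)
    (hρ : ρ^3 - a*ρ^2 - (a+3)*ρ - 1 = 0)
    (hρ' : ρ'^3 - a*ρ'^2 - (a+3)*ρ' - 1 = 0)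
    (hρ'' : ρ''^3 - a*ρ''^2 - (a+3)*ρ'' - 1 = 0)
    (hb1 : (a:ℝ) + 1 < ρ) (hb2 : -2 < ρ' ∧ ρ' < -1) (hb3 : -1 < ρ'' ∧ ρ'' < 0)
    (v w : ℤ) (hv : 0 ≤ v ∧ v ≤ a)
    (hw : v*(a+2) + 1 ≤ w ∧ w ≤ (v+1)*(a+1)) :
    -- α = -v - wρ + (v+1)ρ² is totally positive
    (∀ r ∈ ({ρ, ρ', ρ''} : Set ℝ), 0 < -(v:ℝ) - w*r + (v+1)*r^2) ∧
    -- and indecomposable in O_K = ℤ[ρ]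
    ¬ ∃ b₀ b₁ b₂ c₀ c₁ c₂ : ℤ,
      (∀ r ∈ ({ρ, ρ', ρ''} : Set ℝ), 0 < (b₀:ℝ) + b₁*r + b₂*r^2) ∧
      (∀ r ∈ ({ρ, ρ', ρ''} : Set ℝ), 0 < (c₀:ℝ) + c₁*r + c₂*r^2) ∧
      (-(v:ℝ) - w*ρ + (v+1)*ρ^2
        = ((b₀:ℝ) + b₁*ρ + b₂*ρ^2) + ((c₀:ℝ) + c₁*ρ + c₂*ρ^2)) := by
  obtain ⟨hb2l, hb2r⟩ := hb2
  obtain ⟨hb3l, hb3r⟩ := hb3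
  obtain ⟨hv0, hva⟩ := hv
  obtain ⟨hw1, hw2⟩ := hw
  have ha' : (0:ℝ) ≤ a := by exact_mod_cast ha
  have hv0' : (0:ℝ) ≤ v := by exact_mod_cast hv0
  have hva' : (v:ℝ) ≤ a := by exact_mod_cast hva
  have hw1' : (v:ℝ)*(a+2) + 1 ≤ w := by exact_mod_cast hw1
  have hw2' : (w:ℝ) ≤ ((v:ℝ)+1)*((a:ℝ)+1) := by exact_mod_cast hw2
  have hρ0 : (0:ℝ) < ρ := by linarith
  have hρ1 : (1:ℝ) < ρ := by linarith
  have hρne : ρ ≠ 0 := ne_of_gt hρ0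
  have h1ρ : (0:ℝ) < 1 + ρ := by linarith
  have h1ρne : (1:ℝ) + ρ ≠ 0 := ne_of_gt h1ρ
  have hub : ρ < a + 2 := by nlinarith [sq_nonneg (ρ - a - 1), mul_pos hρ0 hρ0, sq_nonneg ρ]
  -- conjugates in terms of ρ
  have hx1root : (-(1+ρ)/ρ)^3 - a*(-(1+ρ)/ρ)^2 - (a+3)*(-(1+ρ)/ρ) - 1 = 0 := by
    field_simp
    linear_combination hρ
  have hx0root : (-1/(1+ρ))^3 - a*(-1/(1+ρ))^2 - (a+3)*(-1/(1+ρ)) - 1 = 0 := by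
    field_simp
    linear_combination (-1)*hρ
  have hx1a : -2 < -(1+ρ)/ρ := by rw [lt_div_iff₀ hρ0]; linarith
  have hx1b : -(1+ρ)/ρ < -1 := by rw [div_lt_iff₀ hρ0]; linarith
  have hρ'eq : ρ' = -(1+ρ)/ρ := by
    set y := -(1+ρ)/ρ with hy
    have hdiff : (ρ' - y) * (ρ'^2 + ρ'*y + y^2 - a*(ρ'+y) - (a+3)) = 0 := by
      linear_combination hρ' - hx1root
    rcases mul_eq_zero.1 hdiff with h | h
    · linarith [sub_eq_zero.1 h]
    · exfalso
      have h1 : (0:ℝ) < -1 - ρ' := by linarith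
      have h2 : (0:ℝ) < -1 - y := by linarith
      nlinarith [mul_pos h1 h2, mul_pos h1 (by linarith : (0:ℝ) < 1 - ρ'),
        mul_pos h2 (by linarith : (0:ℝ) < 1 - y),
        mul_nonneg ha' (by linarith : (0:ℝ) ≤ -ρ' - y - 1)]
  have hx0a : -1/(1+ρ) < 0 := by
    apply div_neg_of_neg_of_pos <;> linarith
  have hx0b : ((a:ℝ)+2) * (-1/(1+ρ)) > -1 := by
    rw [show ((a:ℝ)+2) * (-1/(1+ρ)) = -((a:ℝ)+2)/(1+ρ) by ring, gt_iff_lt, lt_div_iff₀ h1ρ]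
    linarith
  have hρ''eq : ρ'' = -1/(1+ρ) := by
    set y := -1/(1+ρ) with hy
    have hdiff : (ρ'' - y) * (ρ''^2 + ρ''*y + y^2 - a*(ρ''+y) - (a+3)) = 0 := by
      linear_combination hρ'' - hx0root
    rcases mul_eq_zero.1 hdiff with h | h
    · linarith [sub_eq_zero.1 h]
    · exfalso
      have hyl : ((a:ℝ)+2)*y > -1 := hx0b
      have hy2 : -1 < 2*y := by nlinarith [mul_nonneg ha' (by linarith : (0:ℝ) ≤ -y)]
      have A : ρ''^2 < 1 := by
        nlinarith [mul_pos (by linarith : (0:ℝ) < 1+ρ'') (by linarith : (0:ℝ) < 1-ρ'')]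
      have B : ρ''*y < -y := by
        nlinarith [mul_pos (by linarith : (0:ℝ) < 1+ρ'') (by linarith : (0:ℝ) < -y)]
      have C : y^2 < -y/2 := by
        nlinarith [mul_pos (by linarith : (0:ℝ) < 1+2*y) (by linarith : (0:ℝ) < -y)]
      have D : -(a:ℝ)*ρ'' ≤ a := by
        nlinarith [mul_nonneg ha' (by linarith : (0:ℝ) ≤ 1+ρ'')]
      have E : -(a:ℝ)*y < 1 - 2*(-y) := by nlinarith []
      linarith
  -- positivity of α at the roots
  have hwpos : (0:ℝ) < w := by nlinarith [mul_nonneg hv0' (by linarith : (0:ℝ) ≤ (a:ℝ)+2)]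
  have hαρ : 0 < -(v:ℝ) - w*ρ + (v+1)*ρ^2 := by
    have main : 0 < ρ*(-(v:ℝ) - w*ρ + (v+1)*ρ^2) := by
      nlinarith [mul_nonneg (by linarith : (0:ℝ) ≤ ((v:ℝ)+1)*((a:ℝ)+1) - w) (sq_nonneg ρ),
        mul_nonneg (by linarith : (0:ℝ) ≤ (v:ℝ)+1)
          (mul_pos hρ0 (by linarith : (0:ℝ) < (a:ℝ)+2-ρ)).le,
        mul_pos hρ0 hρ0, hρ]
    by_contra hc; push_neg at hc
    nlinarith [mul_nonneg hρ0.le (by linarith : (0:ℝ) ≤ -(-(v:ℝ) - w*ρ + (v+1)*ρ^2))]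
  have hαρ' : 0 < -(v:ℝ) - w*ρ' + (v+1)*ρ'^2 := by
    nlinarith [mul_pos (by linarith : (0:ℝ) < -ρ') hwpos,
      mul_nonneg (by linarith : (0:ℝ) ≤ (v:ℝ)+1)
        (mul_pos (by linarith : (0:ℝ) < -1-ρ') (by linarith : (0:ℝ) < 1-ρ')).le]
  have hrel'' : (1+ρ)*ρ'' = -1 := by rw [hρ''eq]; field_simp
  have hquadpos : 0 < (1+ρ)^2 - ((a:ℝ)+2)*(1+ρ) - 1 := by
    have key1 : ρ*((1+ρ)^2 - ((a:ℝ)+2)*(1+ρ) - 1) = ρ + 1 := by linear_combination hρ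
    by_contra hc; push_neg at hc
    nlinarith [mul_nonneg hρ0.le (by linarith : (0:ℝ) ≤ -((1+ρ)^2 - ((a:ℝ)+2)*(1+ρ) - 1))]
  have hPa : 0 < -(a:ℝ)*(1+ρ)^2 + ((a:ℝ)+1)^2*(1+ρ) + ((a:ℝ)+1) := by
    have e : ρ*(-(a:ℝ)*(1+ρ)^2 + ((a:ℝ)+1)^2*(1+ρ) + ((a:ℝ)+1)) = ρ^2 + (2-(a:ℝ))*ρ - a := by
      linear_combination (-(a:ℝ))*hρ
    have e2 : 0 < ρ^2 + (2-(a:ℝ))*ρ - a := by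
      nlinarith [mul_pos hρ0 (by linarith : (0:ℝ) < ρ + 2 - a)]
    by_contra hc; push_neg at hc
    nlinarith [mul_nonneg hρ0.le
      (by linarith : (0:ℝ) ≤ -(-(a:ℝ)*(1+ρ)^2 + ((a:ℝ)+1)^2*(1+ρ) + ((a:ℝ)+1)))]
  have hαρ'' : 0 < -(v:ℝ) - w*ρ'' + (v+1)*ρ''^2 := by
    have hS : 0 < ((v:ℝ)+1) + w*(1+ρ) - v*(1+ρ)^2 := by
      have hPv : 0 < ((v:ℝ)+1) + ((v:ℝ)*((a:ℝ)+2)+1)*(1+ρ) - v*(1+ρ)^2 := by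
        nlinarith [mul_nonneg (by linarith : (0:ℝ) ≤ (a:ℝ)-v) hquadpos.le, hPa]
      nlinarith [mul_nonneg (by linarith : (0:ℝ) ≤ (w:ℝ) - ((v:ℝ)*((a:ℝ)+2)+1)) h1ρ.le]
    have hval : (-(v:ℝ) - w*ρ'' + (v+1)*ρ''^2)*(1+ρ)^2
        = ((v:ℝ)+1) + w*(1+ρ) - v*(1+ρ)^2 := by
      linear_combination (-(w:ℝ)*(1+ρ) + ((v:ℝ)+1)*((1+ρ)*ρ''-1))*hrel''
    by_contra hc; push_neg at hc
    nlinarith [mul_nonneg (by linarith : (0:ℝ) ≤ -(-(v:ℝ) - w*ρ'' + (v+1)*ρ''^2))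
      (sq_nonneg (1+ρ))]
  -- signs of g' at the roots
  have hgp : 0 < 3*ρ^2 - 2*(a:ℝ)*ρ - ((a:ℝ)+3) := by
    nlinarith [mul_pos hρ0 (by linarith : (0:ℝ) < ρ - a - 1), mul_pos hρ0 hρ0]
  have hgp' : 0 < 3*ρ'^2 - 2*(a:ℝ)*ρ' - ((a:ℝ)+3) := by
    nlinarith [mul_pos (by linarith : (0:ℝ) < -1-ρ') (by linarith : (0:ℝ) < 1-ρ'),
      mul_nonneg ha' (by linarith : (0:ℝ) ≤ -2*ρ' - 1)]
  have hhalf : -1/2 < ρ'' := by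
    by_contra hc; push_neg at hc
    nlinarith [hrel'']
  have hgn'' : 3*ρ''^2 - 2*(a:ℝ)*ρ'' - ((a:ℝ)+3) < 0 := by
    nlinarith [mul_pos (by linarith : (0:ℝ) < 1/2+ρ'') (by linarith : (0:ℝ) < 1/2-ρ''),
      mul_nonneg ha' (by linarith : (0:ℝ) ≤ 1+2*ρ'')]
  constructor
  · intro r hr
    simp only [Set.mem_insert_iff, Set.mem_singleton_iff] at hr
    rcases hr with rfl | rfl | rfl
    · exact hαρ
    · exact hαρ'
    · exact hαρ''
  · rintro ⟨b₀, b₁, b₂, c₀, c₁, c₂, hβ, hγ, hsum⟩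
    have hmem1 : ρ ∈ ({ρ, ρ', ρ''} : Set ℝ) := by simp
    have hmem2 : ρ' ∈ ({ρ, ρ', ρ''} : Set ℝ) := by simp
    have hmem3 : ρ'' ∈ ({ρ, ρ', ρ''} : Set ℝ) := by simp
    have bound : ∀ d₀ d₁ d₂ : ℤ, 0 < (d₀:ℝ) + d₁*ρ + d₂*ρ^2 →
        0 < (d₀:ℝ) + d₁*ρ' + d₂*ρ'^2 → 0 < (d₀:ℝ) + d₁*ρ'' + d₂*ρ''^2 → 1 ≤ d₀ + d₂ := by
      intro d₀ d₁ d₂ p1 p2 p3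
      have hE2 : (0:ℝ) < 3 + (2*(a:ℝ)+6)*ρ + a*ρ^2 := by
        have h' : (3:ℝ) + (2*(a:ℝ)+6)*ρ + a*ρ^2 = ρ^2 * (3*ρ'^2-2*(a:ℝ)*ρ'-((a:ℝ)+3)) := by
          rw [hρ'eq]; field_simp; ring
        rw [h']; exact mul_pos (by positivity) hgp'
      have hE3 : (a:ℝ) - 6*ρ - ((a:ℝ)+3)*ρ^2 < 0 := by
        have h' : (a:ℝ) - 6*ρ - ((a:ℝ)+3)*ρ^2 = (1+ρ)^2 * (3*ρ''^2-2*(a:ℝ)*ρ''-((a:ℝ)+3)) := by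
          rw [hρ''eq]; field_simp; ring
        rw [h']
        exact mul_neg_of_pos_of_neg (by positivity) hgn''
      have hY2 : ρ'*(3*ρ'^2-2*(a:ℝ)*ρ'-((a:ℝ)+3)) ≠ 0 :=
        mul_ne_zero (by linarith) (ne_of_gt hgp')
      have hY3 : ρ''*(3*ρ''^2-2*(a:ℝ)*ρ''-((a:ℝ)+3)) ≠ 0 :=
        mul_ne_zero (by linarith) (ne_of_lt hgn'')
      have T2eq : ((d₀:ℝ)+d₁*ρ'+d₂*ρ'^2)*(ρ'+1)/(ρ'*(3*ρ'^2-2*(a:ℝ)*ρ'-((a:ℝ)+3)))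
          = ((d₀:ℝ)*ρ^2 - d₁*ρ*(1+ρ) + d₂*(1+ρ)^2)/((1+ρ)*(3 + (2*(a:ℝ)+6)*ρ + a*ρ^2)) := by
        rw [div_eq_div_iff hY2 (mul_ne_zero h1ρne (ne_of_gt hE2))]
        rw [hρ'eq]; field_simp; ring
      have T3eq : ((d₀:ℝ)+d₁*ρ''+d₂*ρ''^2)*(ρ''+1)/(ρ''*(3*ρ''^2-2*(a:ℝ)*ρ''-((a:ℝ)+3)))
          = (-(((d₀:ℝ)*(1+ρ)^2 - d₁*(1+ρ) + d₂)*ρ))/((a:ℝ) - 6*ρ - ((a:ℝ)+3)*ρ^2) := by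
        rw [div_eq_div_iff hY3 (ne_of_lt hE3)]
        rw [hρ''eq]; field_simp; ring
      have hid : ((d₀:ℝ) + d₂) = ((d₀:ℝ)+d₁*ρ+d₂*ρ^2)*(ρ+1)/(ρ*(3*ρ^2-2*(a:ℝ)*ρ-((a:ℝ)+3)))
          + ((d₀:ℝ)+d₁*ρ'+d₂*ρ'^2)*(ρ'+1)/(ρ'*(3*ρ'^2-2*(a:ℝ)*ρ'-((a:ℝ)+3)))
          + ((d₀:ℝ)+d₁*ρ''+d₂*ρ''^2)*(ρ''+1)/(ρ''*(3*ρ''^2-2*(a:ℝ)*ρ''-((a:ℝ)+3))) := by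
        rw [T2eq, T3eq]
        have hE2ne : (3:ℝ) + (2*(a:ℝ)+6)*ρ + a*ρ^2 ≠ 0 := ne_of_gt hE2
        have hE3ne : (a:ℝ) - 6*ρ - ((a:ℝ)+3)*ρ^2 ≠ 0 := ne_of_lt hE3
        have hgpne : (3*ρ^2 - 2*(a:ℝ)*ρ - ((a:ℝ)+3)) ≠ 0 := ne_of_gt hgp
        rw [div_add_div _ _ (mul_ne_zero hρne hgpne) (mul_ne_zero h1ρne hE2ne), div_add_div _ _ (mul_ne_zero (mul_ne_zero hρne hgpne) (mul_ne_zero h1ρne hE2ne)) hE3ne, eq_div_iff (mul_ne_zero (mul_ne_zero (mul_ne_zero hρne hgpne) (mul_ne_zero h1ρne hE2ne)) hE3ne)]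
        linear_combination (3*(a:ℝ)*(d₀:ℝ) - 18*ρ*(d₀:ℝ) + 6*ρ*(a:ℝ)*(d₂:ℝ) + 3*ρ*(a:ℝ)*(d₁:ℝ) + 12*ρ*(a:ℝ)*(d₀:ℝ) + 2*ρ*(a:ℝ)^2*(d₂:ℝ) + 2*ρ*(a:ℝ)^2*(d₀:ℝ) - 27*ρ^2*(d₂:ℝ) - 27*ρ^2*(d₁:ℝ) - 72*ρ^2*(d₀:ℝ) - 3*ρ^2*(a:ℝ)*(d₂:ℝ) + 3*ρ^2*(a:ℝ)*(d₁:ℝ) - 6*ρ^2*(a:ℝ)*(d₀:ℝ) + 5*ρ^2*(a:ℝ)^2*(d₂:ℝ) + 5*ρ^2*(a:ℝ)^2*(d₀:ℝ) - 54*ρ^3*(d₂:ℝ) - 54*ρ^3*(d₁:ℝ) - 54*ρ^3*(d₀:ℝ) - 36*ρ^3*(a:ℝ)*(d₂:ℝ) - 9*ρ^3*(a:ℝ)*(d₁:ℝ) - 42*ρ^3*(a:ℝ)*(d₀:ℝ) - 27*ρ^4*(d₂:ℝ) - 27*ρ^4*(d₁:ℝ) + 18*ρ^4*(d₀:ℝ)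 - 33*ρ^4*(a:ℝ)*(d₂:ℝ) - 12*ρ^4*(a:ℝ)*(d₁:ℝ) - 21*ρ^4*(a:ℝ)*(d₀:ℝ) - 5*ρ^4*(a:ℝ)^2*(d₂:ℝ) - 5*ρ^4*(a:ℝ)^2*(d₀:ℝ) + 18*ρ^5*(d₀:ℝ) - 6*ρ^5*(a:ℝ)*(d₂:ℝ) - 3*ρ^5*(a:ℝ)*(d₁:ℝ) + 6*ρ^5*(a:ℝ)*(d₀:ℝ) - 2*ρ^5*(a:ℝ)^2*(d₂:ℝ) - 2*ρ^5*(a:ℝ)^2*(d₀:ℝ) + 3*ρ^6*(a:ℝ)*(d₀:ℝ))*hρ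
      have t1pos : 0 < ((d₀:ℝ)+d₁*ρ+d₂*ρ^2)*(ρ+1)/(ρ*(3*ρ^2-2*(a:ℝ)*ρ-((a:ℝ)+3))) :=
        div_pos (mul_pos p1 (by linarith)) (mul_pos hρ0 hgp)
      have t2pos : 0 < ((d₀:ℝ)+d₁*ρ'+d₂*ρ'^2)*(ρ'+1)/(ρ'*(3*ρ'^2-2*(a:ℝ)*ρ'-((a:ℝ)+3))) := by
        apply div_pos_of_neg_of_neg
        · exact mul_neg_of_pos_of_neg p2 (by linarith)
        · exact mul_neg_of_neg_of_pos (by linarith) hgp'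
      have t3pos : 0 < ((d₀:ℝ)+d₁*ρ''+d₂*ρ''^2)*(ρ''+1)/(ρ''*(3*ρ''^2-2*(a:ℝ)*ρ''-((a:ℝ)+3))) := by
        apply div_pos (mul_pos p3 (by linarith))
        exact mul_pos_of_neg_of_neg (by linarith) hgn''
      have hpos : (0:ℝ) < (d₀:ℝ) + d₂ := by
        rw [hid]; exact add_pos (add_pos t1pos t2pos) t3pos
      have : (0:ℤ) < d₀ + d₂ := by exact_mod_cast hpos
      omega
    have hlin : ((b₀+c₀+v : ℤ):ℝ) + ((b₁+c₁+w : ℤ):ℝ)*ρ + ((b₂+c₂-(v+1) : ℤ):ℝ)*ρ^2 = 0 := by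
      push_cast
      linear_combination -hsum
    obtain ⟨e0, e1, e2⟩ := indep a ha ρ hρ hb1 _ _ _ hlin
    have h1 := bound b₀ b₁ b₂ (hβ ρ hmem1) (hβ ρ' hmem2) (hβ ρ'' hmem3)
    have h2 := bound c₀ c₁ c₂ (hγ ρ hmem1) (hγ ρ' hmem2) (hγ ρ'' hmem3)
    omega
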